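/- There exist a linear ordered field F with an ordered ring homomorphism ι : ℝ → F and an elementary numerosity n : P(ℝ) → F such that: (1) n([x, x+a)) = n([y, y+a)) for all x, y ∈ ℝ and all real a > 0; (2) n([x, x+a)) = ι(a) · n([0,1)) for all x ∈ ℝ and all rational a > 0; (3) sh( n(X) / n([0,1)) ) = μ_L(X) for every Lebesgue measurable set X ⊆ ℝ, where μ_L is Lebesgue measure (the equality holding in [0,+∞]); and (4) sh( n(X) / n([0,1)) ) ≤ μ̄_L(X) for every set X ⊆ ℝ, where μ̄_L is Lebesgue outer measure. -/

import Mathlib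

open scoped ENNReal

/-- ξ is infinitesimal w.r.t. the embedding ι : ℝ → F. -/
def Infinitesimal {F : Type*} [Field F] [LinearOrder F] [IsStrictOrderedRing F] (ι : ℝ →+*o F) (ξ : F) : Prop :=
  ∀ k : ℕ, 0 < k → -ι (1 / k) < ξ ∧ ξ < ι (1 / k)

/-- ξ is a finite element of F w.r.t. the embedding ι : ℝ → F. -/
def IsFiniteElem {F : Type*} [Field F] [LinearOrder F] [IsStrictOrderedRing F] (ι : ℝ →+*o F) (ξ : F) : Prop :=
  ∃ k : ℤ, -ι k < ξ ∧ ξ < ι k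

-- The shadow (standard part) of ξ, valued in [0,+∞]: the unique real r with
-- ξ - ι r infinitesimal if it exists (converted via `ENNReal.ofReal`), and +∞ otherwise.
open scoped Classical in
noncomputable def sh {F : Type*} [Field F] [LinearOrder F] [IsStrictOrderedRing F] (ι : ℝ →+*o F) (ξ : F) : ℝ≥0∞ :=
  if h : ∃ r : ℝ, Infinitesimal ι (ξ - ι r) then ENNReal.ofReal h.choose else ⊤

/-- An elementary numerosity on Ω together with its superreal field of values:
a linear ordered field F, an ordered ring homomorphism ι : ℝ → F, and a function
num : P(Ω) → F which is nonnegative, gives value 1 to all singletons, and is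
additive on disjoint sets. -/
structure NumerositySystem (Ω : Type) : Type 1 where
  F : Type
  [fieldF : Field F]
  [linOrdF : LinearOrder F]
  [strictOrdF : IsStrictOrderedRing F]
  ι : ℝ →+*o F
  num : Set Ω → F
  nonneg : ∀ X : Set Ω, 0 ≤ num X
  singleton_eq_one : ∀ x : Ω, num {x} = 1
  additive : ∀ A B : Set Ω, Disjoint A B → num (A ∪ B) = num A + num B

attribute [instance] NumerositySystem.fieldF
attribute [instance] NumerositySystem.linOrdF
attribute [instance] NumerositySystem.strictOrdF


open MeasureTheory Filter Set Topology
open scoped Classical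
set_option linter.unusedVariables false
noncomputable section NumConstruction


abbrev Lam := ℝ →₀ ℝ

/-- total weight of `w` inside the set `X`. -/
noncomputable def fmass (w : Lam) (X : Set ℝ) : ℝ :=
  w.sum fun t v => if t ∈ X then v else 0

lemma fmass_finsetSum {ι : Type*} (s : Finset ι) (g : ι → Lam) (X : Set ℝ) :
    fmass (∑ i ∈ s, g i) X = ∑ i ∈ s, fmass (g i) X := by
  unfold fmass
  rw [← Finsupp.sum_finset_sum_index] <;> intros <;> simp [ite_add_ite]

lemma fmass_add (w₁ w₂ : Lam) (X : Set ℝ) :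
    fmass (w₁ + w₂) X = fmass w₁ X + fmass w₂ X := by
  unfold fmass
  rw [Finsupp.sum_add_index'] <;> intros <;> simp [ite_add_ite]

lemma fmass_single (p : ℝ) (m : ℝ) (X : Set ℝ) :
    fmass (Finsupp.single p m) X = X.indicator (fun _ => m) p := by
  unfold fmass
  rw [Finsupp.sum_single_index, Set.indicator_apply]
  simp

lemma fmass_union (w : Lam) {A B : Set ℝ} (h : Disjoint A B) :
    fmass w (A ∪ B) = fmass w A + fmass w B := by
  unfold fmass
  rw [← Finsupp.sum_add]
  apply Finsupp.sum_congr
  intro t _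
  by_cases hA : t ∈ A
  · have hB : t ∉ B := fun hB => (Set.disjoint_left.mp h hA) hB
    simp [hA, hB]
  · by_cases hB : t ∈ B <;> simp [hA, hB]

lemma fmass_nonneg {w : Lam} (hw : ∀ t, 0 ≤ w t) (X : Set ℝ) : 0 ≤ fmass w X := by
  unfold fmass
  apply Finset.sum_nonneg
  intro t _
  by_cases h : t ∈ X <;> simp [h, hw t]

lemma fmass_mono {w : Lam} (hw : ∀ t, 0 ≤ w t) {X Y : Set ℝ} (hXY : X ⊆ Y) :
    fmass w X ≤ fmass w Y := by
  have : Y = X ∪ (Y \ X) := by rw [Set.union_diff_cancel hXY]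
  rw [this, fmass_union w disjoint_sdiff_self_right]
  have := fmass_nonneg hw (Y \ X)
  linarith

lemma fmass_singleton (w : Lam) (x : ℝ) : fmass w {x} = w x := by
  unfold fmass
  classical
  by_cases hx : x ∈ w.support
  · rw [Finsupp.sum, Finset.sum_eq_single_of_mem x hx]
    · simp
    · intro b _ hb; simp [Set.mem_singleton_iff, hb]
  · have hx0 : w x = 0 := Finsupp.notMem_support_iff.mp hx
    rw [Finsupp.sum, Finset.sum_eq_zero, hx0]
    intro b hb
    have : b ≠ x := fun h => hx (h ▸ hb)
    simp [Set.mem_singleton_iff, this]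


/-- next element of `E` after `e` (or `e+1` if none). -/
noncomputable def nxt (E : Finset ℝ) (e : ℝ) : ℝ :=
  if h : (E.filter fun x => e < x).Nonempty then (E.filter fun x => e < x).min' h else e + 1

/-- the cells are indexed by elements of `E` that are not maximal. -/
noncomputable def Efil (E : Finset ℝ) : Finset ℝ :=
  E.filter fun e => (E.filter fun x => e < x).Nonempty

noncomputable def cell (E : Finset ℝ) (e : ℝ) : Set ℝ := Set.Ico e (nxt E e)

lemma lt_nxt (E : Finset ℝ) (e : ℝ) : e < nxt E e := by
  unfold nxt
  split_ifs with h
  · have := (E.filter fun x => e < x).min'_mem h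
    exact (Finset.mem_filter.mp this).2
  · linarith

lemma nxt_mem {E : Finset ℝ} {e : ℝ} (h : (E.filter fun x => e < x).Nonempty) :
    nxt E e ∈ E := by
  unfold nxt
  rw [dif_pos h]
  exact (Finset.mem_filter.mp ((E.filter fun x => e < x).min'_mem h)).1

lemma nxt_le {E : Finset ℝ} {e x : ℝ} (hx : x ∈ E) (hex : e < x) : nxt E e ≤ x := by
  have h : (E.filter fun y => e < y).Nonempty := ⟨x, Finset.mem_filter.mpr ⟨hx, hex⟩⟩
  unfold nxt
  rw [dif_pos h]
  exact Finset.min'_le _ x (Finset.mem_filter.mpr ⟨hx, hex⟩)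

lemma cell_disjoint_of_lt {E : Finset ℝ} {e e' : ℝ} (he' : e' ∈ E) (h : e < e') :
    Disjoint (cell E e) (cell E e') := by
  unfold cell
  rw [Set.Ico_disjoint_Ico]
  have := nxt_le he' h
  exact inf_le_of_left_le (le_sup_of_le_right this)

lemma cell_disjoint {E : Finset ℝ} {e e' : ℝ} (he : e ∈ E) (he' : e' ∈ E) (h : e ≠ e') :
    Disjoint (cell E e) (cell E e') := by
  rcases lt_or_gt_of_ne h with h' | h'
  · exact cell_disjoint_of_lt he' h'
  · exact (cell_disjoint_of_lt he h').symm

/-- every point between two elements of E lies in a cell -/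
lemma cell_cover {E : Finset ℝ} {a b t : ℝ} (ha : a ∈ E) (hb : b ∈ E)
    (hat : a ≤ t) (htb : t < b) : ∃ e ∈ Efil E, t ∈ cell E e := by
  have hne : (E.filter fun x => x ≤ t).Nonempty := ⟨a, Finset.mem_filter.mpr ⟨ha, hat⟩⟩
  set e := (E.filter fun x => x ≤ t).max' hne with he_def
  have heE : e ∈ E := (Finset.mem_filter.mp ((E.filter fun x => x ≤ t).max'_mem hne)).1
  have het : e ≤ t := (Finset.mem_filter.mp ((E.filter fun x => x ≤ t).max'_mem hne)).2
  have heb : e < b := lt_of_le_of_lt het htb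
  refine ⟨e, Finset.mem_filter.mpr ⟨heE, ⟨b, Finset.mem_filter.mpr ⟨hb, heb⟩⟩⟩, ?_⟩
  constructor
  · exact het
  · -- t < nxt E e
    by_contra hcon
    push_neg at hcon
    have h1 : nxt E e ∈ E := nxt_mem ⟨b, Finset.mem_filter.mpr ⟨hb, heb⟩⟩
    have h2 : nxt E e ≤ t := hcon
    have h3 : nxt E e ≤ e := Finset.le_max' (E.filter fun x => x ≤ t) (nxt E e)
      (Finset.mem_filter.mpr ⟨h1, h2⟩)
    exact absurd (lt_nxt E e) (not_lt.mpr h3)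

/-- dichotomy: a cell is inside or disjoint from an interval with endpoints in E. -/
lemma cell_dichotomy {E : Finset ℝ} {u v e : ℝ} (hu : u ∈ E) (hv : v ∈ E) (he : e ∈ E) :
    cell E e ⊆ Set.Ico u v ∨ Disjoint (cell E e) (Set.Ico u v) := by
  unfold cell
  by_cases h1 : u ≤ e
  · by_cases h2 : e < v
    · left
      have := nxt_le hv h2
      exact Set.Ico_subset_Ico h1 this
    · right
      push_neg at h2
      rw [Set.Ico_disjoint_Ico]
      exact inf_le_of_right_le (le_sup_of_le_left h2)
  · right
    push_neg at h1
    have := nxt_le hu h1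
    rw [Set.Ico_disjoint_Ico]
    exact inf_le_of_left_le (le_sup_of_le_right this)

lemma cell_measurable (E : Finset ℝ) (e : ℝ) : MeasurableSet (cell E e) :=
  measurableSet_Ico

lemma volume_cell (E : Finset ℝ) (e : ℝ) :
    volume (cell E e) = ENNReal.ofReal (nxt E e - e) := Real.volume_Ico

lemma volume_cell_ne_top (E : Finset ℝ) (e : ℝ) : volume (cell E e) ≠ ⊤ := by
  rw [volume_cell]; exact ENNReal.ofReal_ne_top

/-- interval with endpoints in E is the union of the cells it contains -/
lemma interval_eq_biUnion {E : Finset ℝ} {u v : ℝ} (hu : u ∈ E) (hv : v ∈ E) :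
    Set.Ico u v = ⋃ e ∈ (Efil E).filter (fun e => cell E e ⊆ Set.Ico u v), cell E e := by
  apply Set.Subset.antisymm
  · intro t ht
    obtain ⟨e, heEfil, hte⟩ := cell_cover hu hv ht.1 ht.2
    have heE : e ∈ E := (Finset.mem_filter.mp heEfil).1
    rcases cell_dichotomy hu hv heE with hsub | hdisj
    · exact Set.mem_biUnion (Finset.mem_filter.mpr ⟨heEfil, hsub⟩) hte
    · exact absurd ht (Set.disjoint_left.mp hdisj hte)
  · intro t ht
    simp only [Set.mem_iUnion, exists_prop] at ht
    obtain ⟨e, he, hte⟩ := ht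
    exact (Finset.mem_filter.mp he).2 hte

lemma volume_interval_sum {E : Finset ℝ} {u v : ℝ} (hu : u ∈ E) (hv : v ∈ E) :
    volume (Set.Ico u v) =
      ∑ e ∈ (Efil E).filter (fun e => cell E e ⊆ Set.Ico u v), volume (cell E e) := by
  conv_lhs => rw [interval_eq_biUnion hu hv]
  apply measure_biUnion_finset
  · intro e he e' he' hne
    exact cell_disjoint (Finset.mem_filter.mp ((Finset.mem_filter.mp he).1)).1
      (Finset.mem_filter.mp ((Finset.mem_filter.mp he').1)).1 hne
  · intro e _; exact cell_measurable E e

/-- sum of lengths of the cells inside `[u,v)` is `v - u` -/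
lemma len_interval_sum {E : Finset ℝ} {u v : ℝ} (hu : u ∈ E) (hv : v ∈ E) (huv : u ≤ v) :
    ∑ e ∈ (Efil E).filter (fun e => cell E e ⊆ Set.Ico u v), (nxt E e - e) = v - u := by
  have h := volume_interval_sum hu hv
  rw [Real.volume_Ico] at h
  have : (ENNReal.ofReal (v - u)).toReal =
      (∑ e ∈ (Efil E).filter (fun e => cell E e ⊆ Set.Ico u v), volume (cell E e)).toReal := by
    rw [h]
  rw [ENNReal.toReal_ofReal (by linarith), ENNReal.toReal_sum (fun e _ => volume_cell_ne_top E e)] at this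
  rw [this]
  apply Finset.sum_congr rfl
  intro e _
  rw [volume_cell, ENNReal.toReal_ofReal (by have := lt_nxt E e; linarith)]

/-- indicator decomposition: membership of `t` in `[u,v)` = sum of cell indicators. -/
lemma indicator_cell_sum {E : Finset ℝ} {u v : ℝ} (hu : u ∈ E) (hv : v ∈ E) (t : ℝ) :
    (Set.Ico u v).indicator (fun _ => (1:ℝ)) t =
      ∑ e ∈ (Efil E).filter (fun e => cell E e ⊆ Set.Ico u v),
        (cell E e).indicator (fun _ => (1:ℝ)) t := by
  by_cases ht : t ∈ Set.Ico u v
  · rw [Set.indicator_of_mem ht]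
    rw [interval_eq_biUnion hu hv] at ht
    simp only [Set.mem_iUnion] at ht
    obtain ⟨e₀, he₀, hte₀⟩ := ht
    rw [Finset.sum_eq_single_of_mem e₀ he₀]
    · rw [Set.indicator_of_mem hte₀]
    · intro e he hne
      rw [Set.indicator_of_notMem]
      intro hte
      have hE : e ∈ E := (Finset.mem_filter.mp (Finset.mem_filter.mp he).1).1
      have hE₀ : e₀ ∈ E := (Finset.mem_filter.mp (Finset.mem_filter.mp he₀).1).1
      exact Set.disjoint_left.mp (cell_disjoint hE hE₀ hne) hte hte₀
  · rw [Set.indicator_of_notMem ht]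
    symm
    apply Finset.sum_eq_zero
    intro e he
    rw [Set.indicator_of_notMem]
    intro hte
    exact ht ((Finset.mem_filter.mp he).2 hte)

/-- the atom of the finite family `XS` given by the "type" `J`. -/
def atom (XS : Finset (Set ℝ)) (J : Finset (Set ℝ)) : Set ℝ :=
  {t | ∀ X ∈ XS, (t ∈ X ↔ X ∈ J)}

lemma atom_disjoint {XS J J' : Finset (Set ℝ)} (hJ : J ∈ XS.powerset)
    (hJ' : J' ∈ XS.powerset) (hne : J ≠ J') : Disjoint (atom XS J) (atom XS J') := by
  rw [Set.disjoint_left]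
  intro t ht ht'
  apply hne
  ext X
  constructor
  · intro hXJ
    by_cases hX : X ∈ XS
    · exact (ht' X hX).mp ((ht X hX).mpr hXJ)
    · exact absurd (Finset.mem_powerset.mp hJ hXJ) hX
  · intro hXJ'
    by_cases hX : X ∈ XS
    · exact (ht X hX).mp ((ht' X hX).mpr hXJ')
    · exact absurd (Finset.mem_powerset.mp hJ' hXJ') hX

lemma atom_mem (XS : Finset (Set ℝ)) (t : ℝ) :
    t ∈ atom XS (XS.filter (fun X => t ∈ X)) := by
  intro X hX
  simp [Finset.mem_filter, hX]

lemma atom_measurable {XS : Finset (Set ℝ)} (hXS : ∀ X ∈ XS, MeasurableSet X)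
    (J : Finset (Set ℝ)) : MeasurableSet (atom XS J) := by
  have : atom XS J = ⋂ X ∈ XS, (if X ∈ J then X else Xᶜ) := by
    ext t
    simp only [atom, Set.mem_setOf_eq, Set.mem_iInter]
    constructor
    · intro h X hX
      by_cases hXJ : X ∈ J
      · simpa [hXJ] using (h X hX).mpr hXJ
      · simp only [hXJ, if_false, Set.mem_compl_iff]
        exact fun ht => hXJ ((h X hX).mp ht)
    · intro h X hX
      have := h X hX
      by_cases hXJ : X ∈ J
      · simp only [hXJ, if_true] at this; exact ⟨fun _ => hXJ, fun _ => this⟩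
      · simp only [hXJ, if_false, Set.mem_compl_iff] at this
        exact ⟨fun ht => absurd ht this, fun h' => absurd h' hXJ⟩
  rw [this]
  exact MeasurableSet.biInter XS.countable_toSet (fun X hX => by
    by_cases hXJ : X ∈ J
    · simpa [hXJ] using hXS X hX
    · simpa [hXJ] using (hXS X hX).compl)

lemma biUnion_atom_inter (XS : Finset (Set ℝ)) (B : Set ℝ) :
    ⋃ J ∈ XS.powerset, (B ∩ atom XS J) = B := by
  apply Set.Subset.antisymm
  · intro t ht
    simp only [Set.mem_iUnion, exists_prop] at ht
    obtain ⟨J, _, htJ⟩ := ht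
    exact htJ.1
  · intro t ht
    refine Set.mem_biUnion (Finset.mem_powerset.mpr (Finset.filter_subset _ _))
      ⟨ht, atom_mem XS t⟩

lemma sum_atom_inter {XS : Finset (Set ℝ)} (hXS : ∀ X ∈ XS, MeasurableSet X)
    {B : Set ℝ} (hB : MeasurableSet B) :
    ∑ J ∈ XS.powerset, volume (B ∩ atom XS J) = volume B := by
  rw [← measure_biUnion_finset (f := fun J => B ∩ atom XS J)
    (fun J hJ J' hJ' hne => (atom_disjoint hJ hJ' hne).mono
      Set.inter_subset_right Set.inter_subset_right)
    (fun J _ => hB.inter (atom_measurable hXS J))]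
  rw [biUnion_atom_inter]

lemma biUnion_atom_inter_mem (XS : Finset (Set ℝ)) (B X : Set ℝ) (hX : X ∈ XS) :
    ⋃ J ∈ XS.powerset.filter (fun J => X ∈ J), (B ∩ atom XS J) = B ∩ X := by
  apply Set.Subset.antisymm
  · intro t ht
    simp only [Set.mem_iUnion, exists_prop] at ht
    obtain ⟨J, hJ, htJ⟩ := ht
    exact ⟨htJ.1, (htJ.2 X hX).mpr (Finset.mem_filter.mp hJ).2⟩
  · intro t ht
    refine Set.mem_biUnion (Finset.mem_filter.mpr
      ⟨Finset.mem_powerset.mpr (Finset.filter_subset _ _), ?_⟩) ⟨ht.1, atom_mem XS t⟩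
    exact Finset.mem_filter.mpr ⟨hX, ht.2⟩

lemma sum_atom_inter_mem {XS : Finset (Set ℝ)} (hXS : ∀ X ∈ XS, MeasurableSet X)
    {B : Set ℝ} (hB : MeasurableSet B) {X : Set ℝ} (hX : X ∈ XS) :
    ∑ J ∈ XS.powerset.filter (fun J => X ∈ J), volume (B ∩ atom XS J) = volume (B ∩ X) := by
  rw [← measure_biUnion_finset (f := fun J => B ∩ atom XS J)
    (fun J hJ J' hJ' hne => (atom_disjoint (Finset.mem_filter.mp hJ).1
      (Finset.mem_filter.mp hJ').1 hne).mono Set.inter_subset_right Set.inter_subset_right)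
    (fun J _ => hB.inter (atom_measurable hXS J))]
  rw [biUnion_atom_inter_mem XS B X hX]


-- ===== the weight construction =====

variable (E : Finset ℝ) (XS : Finset (Set ℝ)) (S : Finset ℝ) (c : ℝ)

/-- number of special points in the cell of `e`. -/
def kC (e : ℝ) : ℕ := (S.filter (fun s => s ∈ cell E e)).card

/-- scaling factor within the cell of `e`. -/
def theta (e : ℝ) : ℝ := (c * (nxt E e - e) - kC E S e) / (nxt E e - e)

def acell (e : ℝ) (J : Finset (Set ℝ)) : Set ℝ := cell E e ∩ atom XS J

def amass (e : ℝ) (J : Finset (Set ℝ)) : ℝ :=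
  theta E S c e * (volume (acell E XS e J)).toReal

def apt (e : ℝ) (J : Finset (Set ℝ)) : ℝ :=
  if h : (acell E XS e J \ ↑S).Nonempty then h.choose else 0

def wgt : Lam :=
  (∑ s ∈ S, Finsupp.single s 1) +
    ∑ e ∈ Efil E, ∑ J ∈ XS.powerset, Finsupp.single (apt E XS S e J) (amass E XS S c e J)

lemma volume_acell_ne_top (e : ℝ) (J : Finset (Set ℝ)) : volume (acell E XS e J) ≠ ⊤ :=
  fun h => volume_cell_ne_top E e (eq_top_mono (measure_mono Set.inter_subset_left) h)

lemma theta_nonneg {e : ℝ} (hc : (kC E S e : ℝ) ≤ c * (nxt E e - e)) : 0 ≤ theta E S c e :=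
  div_nonneg (by linarith) (by have := lt_nxt E e; linarith)

lemma theta_le_c (e : ℝ) : theta E S c e ≤ c := by
  have hlen : 0 < nxt E e - e := by have := lt_nxt E e; linarith
  rw [theta, div_le_iff₀ hlen]
  have : (0:ℝ) ≤ (kC E S e : ℝ) := Nat.cast_nonneg _
  nlinarith

lemma amass_nonneg {e : ℝ} (hc : (kC E S e : ℝ) ≤ c * (nxt E e - e)) (J : Finset (Set ℝ)) :
    0 ≤ amass E XS S c e J :=
  mul_nonneg (theta_nonneg E S c hc) ENNReal.toReal_nonneg

lemma apt_spec {e : ℝ} {J : Finset (Set ℝ)} (h : amass E XS S c e J ≠ 0) :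
    apt E XS S e J ∈ acell E XS e J ∧ apt E XS S e J ∉ (↑S : Set ℝ) := by
  have hne : (acell E XS e J \ ↑S).Nonempty := by
    by_contra hcon
    apply h
    have hsub : acell E XS e J ⊆ ↑S := by
      intro t ht
      by_contra hts
      exact hcon ⟨t, ht, hts⟩
    have : volume (acell E XS e J) = 0 :=
      le_antisymm (le_trans (measure_mono hsub) (le_of_eq (S.finite_toSet.measure_zero _)))
        zero_le
    simp [amass, this]
  rw [apt, dif_pos hne]
  exact ⟨hne.choose_spec.1, hne.choose_spec.2⟩

lemma wgt_nonneg (hc : ∀ e ∈ Efil E, (kC E S e : ℝ) ≤ c * (nxt E e - e)) :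
    ∀ t, 0 ≤ wgt E XS S c t := by
  intro t
  rw [wgt, Finsupp.add_apply]
  apply add_nonneg
  · rw [Finsupp.finset_sum_apply]
    apply Finset.sum_nonneg
    intro s _
    rw [Finsupp.single_apply]
    split_ifs <;> norm_num
  · rw [Finsupp.finset_sum_apply]
    apply Finset.sum_nonneg
    intro e he
    rw [Finsupp.finset_sum_apply]
    apply Finset.sum_nonneg
    intro J _
    rw [Finsupp.single_apply]
    split_ifs with h
    · exact amass_nonneg E XS S c (hc e he) J
    · exact le_refl 0

lemma wgt_apply_mem {s : ℝ} (hs : s ∈ S) : wgt E XS S c s = 1 := by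
  rw [wgt, Finsupp.add_apply, Finsupp.finset_sum_apply, Finsupp.finset_sum_apply]
  have h1 : ∑ s' ∈ S, (Finsupp.single s' (1:ℝ)) s = 1 := by
    rw [Finset.sum_eq_single_of_mem s hs]
    · simp
    · intro b _ hb; rw [Finsupp.single_apply, if_neg hb]
  have h2 : ∑ e ∈ Efil E, (∑ J ∈ XS.powerset, Finsupp.single (apt E XS S e J) (amass E XS S c e J)) s = 0 := by
    apply Finset.sum_eq_zero
    intro e _
    rw [Finsupp.finset_sum_apply]
    apply Finset.sum_eq_zero
    intro J _
    rw [Finsupp.single_apply]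
    split_ifs with h
    · by_contra hm
      have := (apt_spec E XS S c (e := e) (J := J) hm).2
      rw [h] at this
      exact this (by exact_mod_cast hs)
    · rfl
  rw [h1, h2, add_zero]

lemma fmass_wgt (X : Set ℝ) :
    fmass (wgt E XS S c) X =
      (∑ s ∈ S, X.indicator (fun _ => (1:ℝ)) s) +
      ∑ e ∈ Efil E, ∑ J ∈ XS.powerset,
        X.indicator (fun _ => amass E XS S c e J) (apt E XS S e J) := by
  rw [wgt, fmass_add, fmass_finsetSum, fmass_finsetSum]
  congr 1
  · apply Finset.sum_congr rfl; intro s _; rw [fmass_single]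
  · apply Finset.sum_congr rfl; intro e _
    rw [fmass_finsetSum]
    apply Finset.sum_congr rfl; intro J _; rw [fmass_single]

-- ===== per-cell mass computations =====

lemma sum_amass (hXS : ∀ X ∈ XS, MeasurableSet X) {e : ℝ} :
    ∑ J ∈ XS.powerset, amass E XS S c e J =
      c * (nxt E e - e) - kC E S e := by
  have hlen : (0:ℝ) < nxt E e - e := by have := lt_nxt E e; linarith
  have h1 : ∑ J ∈ XS.powerset, amass E XS S c e J
      = theta E S c e * ∑ J ∈ XS.powerset, (volume (acell E XS e J)).toReal := by
    rw [Finset.mul_sum]; exact Finset.sum_congr rfl fun _ _ => rfl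
  rw [h1, ← ENNReal.toReal_sum (fun J _ => volume_acell_ne_top E XS e J)]
  rw [show ∑ J ∈ XS.powerset, volume (acell E XS e J) = volume (cell E e) from
    sum_atom_inter hXS (cell_measurable E e)]
  rw [volume_cell, ENNReal.toReal_ofReal (le_of_lt hlen), theta]
  field_simp

lemma cellmass_subset (hXS : ∀ X ∈ XS, MeasurableSet X) {e : ℝ} {I : Set ℝ}
    (h : cell E e ⊆ I) :
    ∑ J ∈ XS.powerset, I.indicator (fun _ => amass E XS S c e J) (apt E XS S e J) =
      c * (nxt E e - e) - kC E S e := by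
  rw [← sum_amass E XS S c hXS]
  apply Finset.sum_congr rfl
  intro J _
  by_cases hm : amass E XS S c e J = 0
  · rw [hm]; simp
  · rw [Set.indicator_of_mem (h (Set.inter_subset_left ((apt_spec E XS S c hm).1)))]

lemma cellmass_disjoint {e : ℝ} {I : Set ℝ} (h : Disjoint (cell E e) I) :
    ∑ J ∈ XS.powerset, I.indicator (fun _ => amass E XS S c e J) (apt E XS S e J) = 0 := by
  apply Finset.sum_eq_zero
  intro J _
  by_cases hm : amass E XS S c e J = 0
  · rw [hm]; simp
  · rw [Set.indicator_of_notMem]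
    exact fun hin => Set.disjoint_left.mp h (Set.inter_subset_left ((apt_spec E XS S c hm).1)) hin

lemma cellmass_memXS (hXS : ∀ X ∈ XS, MeasurableSet X) {e : ℝ} {X : Set ℝ} (hX : X ∈ XS) :
    ∑ J ∈ XS.powerset, X.indicator (fun _ => amass E XS S c e J) (apt E XS S e J) =
      theta E S c e * (volume (cell E e ∩ X)).toReal := by
  have step1 : ∀ J ∈ XS.powerset,
      X.indicator (fun _ => amass E XS S c e J) (apt E XS S e J) =
      (if X ∈ J then amass E XS S c e J else 0) := by
    intro J _
    by_cases hm : amass E XS S c e J = 0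
    · rw [hm]; simp
    · have hin := (apt_spec E XS S c hm).1
      have hmem : apt E XS S e J ∈ X ↔ X ∈ J := (Set.inter_subset_right hin) X hX
      by_cases hXJ : X ∈ J
      · rw [Set.indicator_of_mem (hmem.mpr hXJ), if_pos hXJ]
      · rw [Set.indicator_of_notMem (fun h' => hXJ (hmem.mp h')), if_neg hXJ]
  rw [Finset.sum_congr rfl step1, ← Finset.sum_filter]
  have h1 : ∑ J ∈ XS.powerset.filter (fun J => X ∈ J), amass E XS S c e J
      = theta E S c e * ∑ J ∈ XS.powerset.filter (fun J => X ∈ J), (volume (acell E XS e J)).toReal := by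
    rw [Finset.mul_sum]; exact Finset.sum_congr rfl fun _ _ => rfl
  rw [h1, ← ENNReal.toReal_sum (fun J _ => volume_acell_ne_top E XS e J)]
  rw [show ∑ J ∈ XS.powerset.filter (fun J => X ∈ J), volume (acell E XS e J)
      = volume (cell E e ∩ X) from sum_atom_inter_mem hXS (cell_measurable E e) hX]

-- ===== special-point counts =====

lemma indicator_card (T : Finset ℝ) (I : Set ℝ) :
    (∑ s ∈ T, I.indicator (fun _ => (1:ℝ)) s) = ((T.filter (fun s => s ∈ I)).card : ℝ) := by
  rw [← Finset.sum_boole]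
  apply Finset.sum_congr rfl
  intro s _
  rw [Set.indicator_apply]

lemma sum_indicator_S {u v : ℝ} (hu : u ∈ E) (hv : v ∈ E) :
    (∑ s ∈ S, (Set.Ico u v).indicator (fun _ => (1:ℝ)) s) =
      ∑ e ∈ (Efil E).filter (fun e => cell E e ⊆ Set.Ico u v), (kC E S e : ℝ) := by
  have h1 : ∀ s ∈ S, (Set.Ico u v).indicator (fun _ => (1:ℝ)) s =
      ∑ e ∈ (Efil E).filter (fun e => cell E e ⊆ Set.Ico u v),
        (cell E e).indicator (fun _ => (1:ℝ)) s :=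
    fun s _ => indicator_cell_sum hu hv s
  rw [Finset.sum_congr rfl h1, Finset.sum_comm]
  apply Finset.sum_congr rfl
  intro e _
  rw [kC, indicator_card]

/-- exact mass of an interval with endpoints in `E`. -/
lemma fmass_wgt_interval (hXS : ∀ X ∈ XS, MeasurableSet X)
    {u v : ℝ} (hu : u ∈ E) (hv : v ∈ E) (huv : u ≤ v) :
    fmass (wgt E XS S c) (Set.Ico u v) = c * (v - u) := by
  rw [fmass_wgt, sum_indicator_S E S hu hv]
  have hsplit : ∑ e ∈ Efil E, ∑ J ∈ XS.powerset,
      (Set.Ico u v).indicator (fun _ => amass E XS S c e J) (apt E XS S e J)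
      = ∑ e ∈ (Efil E).filter (fun e => cell E e ⊆ Set.Ico u v),
          (c * (nxt E e - e) - kC E S e) := by
    rw [← Finset.sum_filter_add_sum_filter_not (Efil E) (fun e => cell E e ⊆ Set.Ico u v)]
    have h2 : ∑ e ∈ (Efil E).filter (fun e => ¬ cell E e ⊆ Set.Ico u v), ∑ J ∈ XS.powerset,
        (Set.Ico u v).indicator (fun _ => amass E XS S c e J) (apt E XS S e J) = 0 := by
      apply Finset.sum_eq_zero
      intro e he
      obtain ⟨heEfil, hnsub⟩ := Finset.mem_filter.mp he
      have heE : e ∈ E := (Finset.mem_filter.mp heEfil).1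
      rcases cell_dichotomy hu hv heE with hsub | hdisj
      · exact absurd hsub hnsub
      · exact cellmass_disjoint E XS S c hdisj
    rw [h2, add_zero]
    apply Finset.sum_congr rfl
    intro e he
    exact cellmass_subset E XS S c hXS (Finset.mem_filter.mp he).2
  rw [hsplit, Finset.sum_sub_distrib]
  rw [show ∑ e ∈ (Efil E).filter (fun e => cell E e ⊆ Set.Ico u v), c * (nxt E e - e)
    = c * (v - u) by rw [← Finset.mul_sum, len_interval_sum hu hv huv]]
  ring

-- ===== approximation on a member of XS =====

lemma sum_kC_le : ∑ e ∈ Efil E, (kC E S e : ℝ) ≤ S.card := by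
  have h1 : ∀ e ∈ Efil E, (kC E S e : ℝ) = ∑ s ∈ S, (cell E e).indicator (fun _ => (1:ℝ)) s := by
    intro e _; rw [kC, indicator_card]
  rw [Finset.sum_congr rfl h1, Finset.sum_comm]
  have hbound : ∀ s ∈ S, ∑ e ∈ Efil E, (cell E e).indicator (fun _ => (1:ℝ)) s ≤ 1 := by
    intro s _
    by_cases hex : ∃ e₀ ∈ Efil E, s ∈ cell E e₀
    · obtain ⟨e₀, he₀, hse₀⟩ := hex
      rw [Finset.sum_eq_single_of_mem e₀ he₀]
      · rw [Set.indicator_of_mem hse₀]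
      · intro e he hne
        rw [Set.indicator_of_notMem]
        intro hse
        have hE : e ∈ E := (Finset.mem_filter.mp he).1
        have hE₀ : e₀ ∈ E := (Finset.mem_filter.mp he₀).1
        exact Set.disjoint_left.mp (cell_disjoint hE hE₀ hne) hse hse₀
    · push_neg at hex
      rw [Finset.sum_eq_zero (fun e he => Set.indicator_of_notMem (hex e he) _)]
      norm_num
  calc ∑ s ∈ S, ∑ e ∈ Efil E, (cell E e).indicator (fun _ => (1:ℝ)) s
      ≤ ∑ s ∈ S, 1 := Finset.sum_le_sum hbound
    _ = S.card := by simp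

lemma volume_cell_inter_toReal_le (e : ℝ) (X : Set ℝ) :
    (volume (cell E e ∩ X)).toReal ≤ nxt E e - e := by
  have h1 : volume (cell E e ∩ X) ≤ volume (cell E e) := measure_mono Set.inter_subset_left
  have h2 := volume_cell E e
  have h3 := ENNReal.toReal_mono (volume_cell_ne_top E e) h1
  rw [h2, ENNReal.toReal_ofReal (by have := lt_nxt E e; linarith)] at h3
  exact h3

lemma fmass_wgt_approx (hXS : ∀ X ∈ XS, MeasurableSet X)
    (hc : ∀ e ∈ Efil E, (kC E S e : ℝ) ≤ c * (nxt E e - e))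
    {X : Set ℝ} (hX : X ∈ XS) :
    |fmass (wgt E XS S c) X -
      c * ∑ e ∈ Efil E, (volume (cell E e ∩ X)).toReal| ≤ S.card := by
  rw [fmass_wgt]
  rw [Finset.sum_congr rfl (fun e (_ : e ∈ Efil E) => cellmass_memXS E XS S c hXS hX)]
  set κ : ℝ := ∑ s ∈ S, X.indicator (fun _ => (1:ℝ)) s with hκ
  have hκ0 : 0 ≤ κ := Finset.sum_nonneg (fun s _ => Set.indicator_nonneg (fun _ _ => by norm_num) s)
  have hκ1 : κ ≤ S.card := by
    have : ∀ s ∈ S, X.indicator (fun _ => (1:ℝ)) s ≤ 1 := by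
      intro s _
      by_cases h : s ∈ X
      · rw [Set.indicator_of_mem h]
      · rw [Set.indicator_of_notMem h]; norm_num
    calc κ ≤ ∑ s ∈ S, (1:ℝ) := Finset.sum_le_sum this
      _ = S.card := by simp
  have key1 : 0 ≤ ∑ e ∈ Efil E, (c - theta E S c e) * (volume (cell E e ∩ X)).toReal := by
    apply Finset.sum_nonneg
    intro e _
    exact mul_nonneg (by have := theta_le_c E S c e; linarith) ENNReal.toReal_nonneg
  have key2 : ∑ e ∈ Efil E, (c - theta E S c e) * (volume (cell E e ∩ X)).toReal ≤ S.card := by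
    calc ∑ e ∈ Efil E, (c - theta E S c e) * (volume (cell E e ∩ X)).toReal
        ≤ ∑ e ∈ Efil E, (kC E S e : ℝ) := by
          apply Finset.sum_le_sum
          intro e he
          have hlen : (0:ℝ) < nxt E e - e := by have := lt_nxt E e; linarith
          have hth : c - theta E S c e = (kC E S e : ℝ) / (nxt E e - e) := by
            rw [theta]; field_simp; ring
          rw [hth]
          have hT := volume_cell_inter_toReal_le E e X
          have hT0 : (0:ℝ) ≤ (volume (cell E e ∩ X)).toReal := ENNReal.toReal_nonneg
          rw [div_mul_eq_mul_div, div_le_iff₀ hlen]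
          have : (0:ℝ) ≤ (kC E S e : ℝ) := Nat.cast_nonneg _
          nlinarith
      _ ≤ S.card := sum_kC_le E S
  have expand : c * ∑ e ∈ Efil E, (volume (cell E e ∩ X)).toReal
      - ∑ e ∈ Efil E, theta E S c e * (volume (cell E e ∩ X)).toReal
      = ∑ e ∈ Efil E, (c - theta E S c e) * (volume (cell E e ∩ X)).toReal := by
    rw [Finset.mul_sum, ← Finset.sum_sub_distrib]
    apply Finset.sum_congr rfl
    intro e _
    ring
  rw [abs_le]
  constructor <;> nlinarith [key1, key2]

-- ===== big union of cells =====

lemma volume_Ubig_inter {E : Finset ℝ} {X : Set ℝ} (hX : MeasurableSet X) :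
    volume ((⋃ e ∈ Efil E, cell E e) ∩ X) = ∑ e ∈ Efil E, volume (cell E e ∩ X) := by
  rw [Set.iUnion₂_inter]
  apply measure_biUnion_finset
  · intro e he e' he' hne
    exact ((cell_disjoint (Finset.mem_filter.mp he).1 (Finset.mem_filter.mp he').1 hne).mono
      Set.inter_subset_left Set.inter_subset_left)
  · intro e _
    exact (cell_measurable E e).inter hX

lemma volume_Ubig_inter_ne_top {E : Finset ℝ} {X : Set ℝ} (hX : MeasurableSet X) :
    volume ((⋃ e ∈ Efil E, cell E e) ∩ X) ≠ ⊤ := by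
  rw [volume_Ubig_inter hX]
  exact (ENNReal.sum_lt_top.mpr
    (fun e _ => lt_of_le_of_lt (measure_mono Set.inter_subset_left)
      (lt_top_iff_ne_top.mpr (volume_cell_ne_top E e)))).ne

lemma Ico_subset_Ubig {E : Finset ℝ} {a b : ℝ} (ha : a ∈ E) (hb : b ∈ E) :
    Set.Ico a b ⊆ ⋃ e ∈ Efil E, cell E e := by
  intro t ht
  obtain ⟨e, he, hte⟩ := cell_cover ha hb ht.1 ht.2
  exact Set.mem_biUnion he hte

-- ===== the conditions =====

inductive Cnd where
  | nn : Cnd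
  | sing : ℝ → Cnd
  | intv : ℝ → ℝ → ℝ → Cnd
  | scal : ℝ → ℚ → Cnd
  | meas : Set ℝ → ℕ → Cnd
deriving Inhabited

def ratio (w : Lam) (X : Set ℝ) : ℝ := fmass w X / fmass w (Set.Ico 0 1)

def cset : Cnd → Set Lam
  | .nn => {w | (∀ t, 0 ≤ w t) ∧ 1 ≤ fmass w (Set.Ico 0 1)}
  | .sing x => {w | w x = 1}
  | .intv x y a => {w | 0 < a → fmass w (Set.Ico x (x+a)) = fmass w (Set.Ico y (y+a))}
  | .scal x q => {w | 0 < q → fmass w (Set.Ico x (x+(q:ℝ))) = (q:ℝ) * fmass w (Set.Ico 0 1)}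
  | .meas X k => {w | MeasurableSet X → 0 < k →
      (volume X ≠ ⊤ → |ratio w X - (volume X).toReal| < 1/k) ∧
      (volume X = ⊤ → (k:ℝ) < ratio w X)}

def singOf : Cnd → Finset ℝ
  | .sing x => {x}
  | _ => ∅

def epOf : Cnd → Finset ℝ
  | .intv x y a => {x, x+a, y, y+a}
  | .scal x q => {x, x+(q:ℝ)}
  | _ => ∅

def measOf : Cnd → Set ℝ
  | .meas X _ => if MeasurableSet X then X else ∅
  | _ => ∅

def kOf : Cnd → ℕ
  | .meas _ k => k
  | _ => 0

-- ===== choice of the cutoff N for one measurable set =====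

lemma exists_cutoff {X : Set ℝ} (ε : ℝ≥0∞) (hε : ε ≠ 0) (K : ℝ≥0∞) (hK : K ≠ ⊤) :
    ∃ n : ℕ, ∀ N : ℕ, n ≤ N →
      (volume X ≠ ⊤ → volume X ≤ volume (X ∩ Set.Ico (-(N:ℝ)) N) + ε) ∧
      (volume X = ⊤ → K < volume (X ∩ Set.Ico (-(N:ℝ)) N)) := by
  have hmono : Monotone (fun n : ℕ => X ∩ Set.Ico (-(n:ℝ)) (n:ℝ)) := by
    intro m n hmn
    apply Set.inter_subset_inter_right
    apply Set.Ico_subset_Ico <;> [skip; exact_mod_cast hmn]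
    simp only [neg_le_neg_iff]
    exact_mod_cast hmn
  have hU : ⋃ n : ℕ, (X ∩ Set.Ico (-(n:ℝ)) (n:ℝ)) = X := by
    apply Set.Subset.antisymm
    · exact Set.iUnion_subset (fun n => Set.inter_subset_left)
    · intro x hx
      obtain ⟨n, hn⟩ := exists_nat_gt (|x| + 1)
      have h1 : -(n:ℝ) ≤ x := by
        have := neg_abs_le x
        linarith
      have h2 : x < (n:ℝ) := lt_of_le_of_lt (le_abs_self x) (by linarith)
      exact Set.mem_iUnion.mpr ⟨n, hx, h1, h2⟩
  have hsup : volume X = ⨆ n : ℕ, volume (X ∩ Set.Ico (-(n:ℝ)) (n:ℝ)) := by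
    conv_lhs => rw [← hU]
    exact hmono.directed_le.measure_iUnion
  by_cases htop : volume X = ⊤
  · have : K < ⨆ n : ℕ, volume (X ∩ Set.Ico (-(n:ℝ)) (n:ℝ)) := by
      rw [← hsup, htop]; exact hK.lt_top
    obtain ⟨n, hn⟩ := lt_iSup_iff.mp this
    exact ⟨n, fun N hnN => ⟨fun h => absurd htop h, fun _ =>
      lt_of_lt_of_le hn (measure_mono (hmono hnN))⟩⟩
  · by_cases hle : volume X ≤ ε
    · exact ⟨0, fun N _ => ⟨fun _ => le_trans hle le_add_self, fun h => absurd h htop⟩⟩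
    · push_neg at hle
      have hlt : volume X - ε < ⨆ n : ℕ, volume (X ∩ Set.Ico (-(n:ℝ)) (n:ℝ)) := by
        rw [← hsup]
        apply ENNReal.sub_lt_self htop _ hε
        intro h0
        rw [h0] at hle
        exact (not_lt.mpr (zero_le : (0:ℝ≥0∞) ≤ ε)) hle
      obtain ⟨n, hn⟩ := lt_iSup_iff.mp hlt
      refine ⟨n, fun N hnN => ⟨fun _ => ?_, fun h => absurd h htop⟩⟩
      have := lt_of_lt_of_le hn (measure_mono (hmono hnN))
      exact tsub_le_iff_right.mp (le_of_lt this)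

-- ===== the main existence lemma =====

lemma natCastNonneg (n : ℕ) : (0:ℝ) ≤ (n:ℝ) := Nat.cast_nonneg n

set_option maxHeartbeats 2000000 in
theorem exists_wgt (u : Finset Cnd) : ∃ w : Lam, ∀ cc ∈ u, w ∈ cset cc := by
  classical
  set S : Finset ℝ := u.sup singOf with hSdef
  clear_value S
  set EP : Finset ℝ := u.sup epOf with hEPdef
  clear_value EP
  set XS : Finset (Set ℝ) := u.image measOf with hXSdef
  clear_value XS
  set kmax : ℕ := u.sup kOf with hkmaxdef
  clear_value kmax
  have hXSmeas : ∀ X ∈ XS, MeasurableSet X := by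
    intro X hX
    rw [hXSdef] at hX
    obtain ⟨cc, _, rfl⟩ := Finset.mem_image.mp hX
    cases cc with
    | nn => exact MeasurableSet.empty
    | sing x => exact MeasurableSet.empty
    | intv x y a => exact MeasurableSet.empty
    | scal x q => exact MeasurableSet.empty
    | meas Y k =>
      by_cases h : MeasurableSet Y
      · simpa [measOf, h] using h
      · simp [measOf, h]
  -- choice of the cutoff N
  set ε : ℝ≥0∞ := ENNReal.ofReal (1/(2*((kmax:ℝ)+1))) with hεdef
  clear_value ε
  have hε0 : ε ≠ 0 := by
    rw [hεdef]
    simp only [ne_eq, ENNReal.ofReal_eq_zero, not_le]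
    positivity
  have hεtop : ε ≠ ⊤ := by rw [hεdef]; exact ENNReal.ofReal_ne_top
  have key : ∀ X ∈ XS, ∃ n : ℕ, ∀ N : ℕ, n ≤ N →
      (volume X ≠ ⊤ → volume X ≤ volume (X ∩ Set.Ico (-(N:ℝ)) N) + ε) ∧
      (volume X = ⊤ → ((kmax : ℝ≥0∞) + 1) < volume (X ∩ Set.Ico (-(N:ℝ)) N)) :=
    fun X _ => exists_cutoff ε hε0 ((kmax : ℝ≥0∞) + 1)
      (ENNReal.add_ne_top.mpr ⟨ENNReal.natCast_ne_top _, ENNReal.one_ne_top⟩)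
  choose nf hnf using key
  set N₀ : ℕ := XS.attach.sup (fun X => nf X.1 X.2) with hN₀def
  clear_value N₀
  set B : ℝ := ∑ x ∈ EP, |x| with hBdef
  clear_value B
  have hB : ∀ x ∈ EP, |x| ≤ B := by
    intro x hx
    rw [hBdef]
    exact Finset.single_le_sum (fun y _ => abs_nonneg y) hx
  set N : ℕ := N₀ + ⌈B⌉₊ + 2 with hNdef
  clear_value N
  have hN2 : (2:ℝ) ≤ (N:ℝ) := by
    rw [hNdef]; push_cast; linarith [natCastNonneg N₀, natCastNonneg ⌈B⌉₊]
  have hNB : ∀ x ∈ EP, |x| ≤ (N:ℝ) := by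
    intro x hx
    have h1 := hB x hx
    have h2 : B ≤ (⌈B⌉₊ : ℝ) := Nat.le_ceil B
    have h3 : ((⌈B⌉₊:ℕ) : ℝ) ≤ (N:ℝ) := by rw [hNdef]; push_cast; linarith [natCastNonneg N₀]
    linarith
  have hNcut : ∀ X, (hX : X ∈ XS) →
      (volume X ≠ ⊤ → volume X ≤ volume (X ∩ Set.Ico (-(N:ℝ)) N) + ε) ∧
      (volume X = ⊤ → ((kmax : ℝ≥0∞) + 1) < volume (X ∩ Set.Ico (-(N:ℝ)) N)) := by
    intro X hX
    apply hnf X hX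
    calc nf X hX ≤ N₀ := by
          rw [hN₀def]
          exact Finset.le_sup (f := fun X => nf X.1 X.2) (Finset.mem_attach XS ⟨X, hX⟩)
      _ ≤ N := by rw [hNdef]; omega
  -- the endpoint grid
  set E : Finset ℝ := insert (-(N:ℝ)) (insert ((N:ℝ)) (insert 0 (insert 1 EP))) with hEdef
  clear_value E
  have hmNE : -(N:ℝ) ∈ E := by simp [hEdef]
  have hNE : (N:ℝ) ∈ E := by simp [hEdef]
  have h0E : (0:ℝ) ∈ E := by simp [hEdef]
  have h1E : (1:ℝ) ∈ E := by simp [hEdef]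
  have hEPE : ∀ z ∈ EP, z ∈ E := by
    intro z hz; simp [hEdef, hz]
  -- the scale c
  set sigl : ℝ := ∑ e ∈ Efil E, 1/(nxt E e - e) with hsigdef
  clear_value sigl
  have hsig0 : 0 ≤ sigl := by
    rw [hsigdef]
    exact Finset.sum_nonneg (fun e _ => one_div_nonneg.mpr (by linarith [lt_nxt E e]))
  set c : ℝ := ((S.card:ℝ) + 1) * (1 + sigl) + 2*((S.card:ℝ)+1)*((kmax:ℝ)+1) with hcdef
  clear_value c
  have hSc0 : (0:ℝ) ≤ S.card := Nat.cast_nonneg _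
  have hkm0 : (0:ℝ) ≤ kmax := Nat.cast_nonneg _
  have hc1 : 1 ≤ c := by rw [hcdef]; nlinarith
  have hc0 : 0 < c := lt_of_lt_of_le one_pos hc1
  have hcS : (S.card : ℝ) ≤ c := by rw [hcdef]; nlinarith
  have hc2 : 2*((S.card:ℝ)+1)*((kmax:ℝ)+1) ≤ c := by rw [hcdef]; nlinarith
  have hckC : ∀ e ∈ Efil E, (kC E S e : ℝ) ≤ c * (nxt E e - e) := by
    intro e he
    have hlen : 0 < nxt E e - e := by have := lt_nxt E e; linarith
    have h1l : 1/(nxt E e - e) ≤ sigl := by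
      rw [hsigdef]
      apply Finset.single_le_sum (f := fun e => 1/(nxt E e - e)) _ he
      intro i _
      exact one_div_nonneg.mpr (by linarith [lt_nxt E i])
    have hkS : (kC E S e : ℝ) ≤ S.card := Nat.cast_le.mpr (Finset.card_filter_le S _)
    have hstep : 1 ≤ (1 + sigl) * (nxt E e - e) := by
      have heq : (1/(nxt E e - e)) * (nxt E e - e) = 1 := by field_simp
      nlinarith
    have : ((S.card:ℝ) + 1) ≤ c * (nxt E e - e) := by
      rw [hcdef]; nlinarith
    linarith
  -- the weight
  refine ⟨wgt E XS S c, ?_⟩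
  have hunit : fmass (wgt E XS S c) (Set.Ico (0:ℝ) 1) = c := by
    rw [fmass_wgt_interval E XS S c hXSmeas h0E h1E (by norm_num)]; ring
  intro cc hcc
  cases cc with
  | nn =>
    refine ⟨wgt_nonneg E XS S c hckC, ?_⟩
    rw [hunit]; exact hc1
  | sing x =>
    have hx : x ∈ S := by
      have h := Finset.le_sup (f := singOf) hcc
      rw [← hSdef] at h
      exact h (show x ∈ singOf (Cnd.sing x) by simp [singOf])
    exact wgt_apply_mem E XS S c hx
  | intv x y a =>
    intro ha
    have hEp := Finset.le_sup (f := epOf) hcc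
    rw [← hEPdef] at hEp
    have hx : x ∈ E := hEPE x (hEp (show x ∈ epOf (Cnd.intv x y a) by simp [epOf]))
    have hxa : x + a ∈ E := hEPE _ (hEp (show x + a ∈ epOf (Cnd.intv x y a) by simp [epOf]))
    have hy : y ∈ E := hEPE y (hEp (show y ∈ epOf (Cnd.intv x y a) by simp [epOf]))
    have hya : y + a ∈ E := hEPE _ (hEp (show y + a ∈ epOf (Cnd.intv x y a) by simp [epOf]))
    show fmass _ _ = fmass _ _
    rw [fmass_wgt_interval E XS S c hXSmeas hx hxa (by linarith),
        fmass_wgt_interval E XS S c hXSmeas hy hya (by linarith)]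
    ring
  | scal x q =>
    intro hq
    have hq' : (0:ℝ) < (q:ℝ) := by exact_mod_cast hq
    have hEp := Finset.le_sup (f := epOf) hcc
    rw [← hEPdef] at hEp
    have hx : x ∈ E := hEPE x (hEp (show x ∈ epOf (Cnd.scal x q) by simp [epOf]))
    have hxq : x + (q:ℝ) ∈ E := hEPE _ (hEp (show x + (q:ℝ) ∈ epOf (Cnd.scal x q) by simp [epOf]))
    show fmass _ _ = _ * fmass _ _
    rw [fmass_wgt_interval E XS S c hXSmeas hx hxq (by linarith), hunit]
    ring
  | meas X k =>
    intro hXm hk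
    have hXmem : X ∈ XS := by
      rw [hXSdef]
      exact Finset.mem_image.mpr ⟨.meas X k, hcc, by simp [measOf, hXm]⟩
    have hkle : k ≤ kmax := by
      have h := Finset.le_sup (f := kOf) hcc
      rw [← hkmaxdef] at h
      exact h
    have hk1 : (1:ℝ) ≤ (k:ℝ) := by exact_mod_cast hk
    have hkkm : (k:ℝ) ≤ (kmax:ℝ) := by exact_mod_cast hkle
    have happrox := fmass_wgt_approx E XS S c hXSmeas hckC hXmem
    set T : ℝ := ∑ e ∈ Efil E, (volume (cell E e ∩ X)).toReal with hTdef
    clear_value T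
    have hTne : volume ((⋃ e ∈ Efil E, cell E e) ∩ X) ≠ ⊤ := volume_Ubig_inter_ne_top hXm
    have hTeq : T = (volume ((⋃ e ∈ Efil E, cell E e) ∩ X)).toReal := by
      rw [volume_Ubig_inter hXm, ENNReal.toReal_sum (fun e _ => fun h =>
        volume_cell_ne_top E e (eq_top_mono (measure_mono Set.inter_subset_left) h))]
      exact hTdef
    have hsub2 : X ∩ Set.Ico (-(N:ℝ)) N ⊆ (⋃ e ∈ Efil E, cell E e) ∩ X :=
      fun t ht => ⟨Ico_subset_Ubig hmNE hNE ht.2, ht.1⟩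
    have hratio : ratio (wgt E XS S c) X = fmass (wgt E XS S c) X / c := by
      rw [ratio, hunit]
    have hcne : c ≠ 0 := ne_of_gt hc0
    have hdiff : |fmass (wgt E XS S c) X / c - T| ≤ (S.card : ℝ) / c := by
      have h1 : fmass (wgt E XS S c) X / c - T = (fmass (wgt E XS S c) X - c * T) / c := by
        rw [sub_div, mul_comm c T, mul_div_assoc, div_self hcne, mul_one]
      rw [h1, abs_div, abs_of_pos hc0]
      gcongr
    constructor
    · -- finite case
      intro hvol
      have hub : volume ((⋃ e ∈ Efil E, cell E e) ∩ X) ≤ volume X :=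
        measure_mono Set.inter_subset_right
      have hup : T ≤ (volume X).toReal := by
        rw [hTeq]; exact ENNReal.toReal_mono hvol hub
      have hcut := (hNcut X hXmem).1 hvol
      have hlow : volume X ≤ volume ((⋃ e ∈ Efil E, cell E e) ∩ X) + ε :=
        le_trans hcut (add_le_add_left (measure_mono hsub2) ε)
      have hlowR : (volume X).toReal ≤ T + 1/(2*((kmax:ℝ)+1)) := by
        have hne2 : volume ((⋃ e ∈ Efil E, cell E e) ∩ X) + ε ≠ ⊤ :=
          ENNReal.add_ne_top.mpr ⟨hTne, hεtop⟩
        have h := ENNReal.toReal_mono hne2 hlow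
        rw [ENNReal.toReal_add hTne hεtop, hεdef, ENNReal.toReal_ofReal (by positivity)] at h
        rw [hTeq]; exact h
      have habs2 : |T - (volume X).toReal| ≤ 1/(2*((kmax:ℝ)+1)) :=
        abs_le.mpr ⟨by linarith, by linarith⟩
      rw [hratio]
      have hchain : |fmass (wgt E XS S c) X / c - (volume X).toReal| ≤
          (S.card:ℝ)/c + 1/(2*((kmax:ℝ)+1)) := by
        calc |fmass (wgt E XS S c) X / c - (volume X).toReal|
            ≤ |fmass (wgt E XS S c) X / c - T| + |T - (volume X).toReal| := by
              have := abs_sub_abs_le_abs_sub (fmass (wgt E XS S c) X / c - T) ((volume X).toReal - T)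
              exact abs_sub_le _ T _
          _ ≤ (S.card:ℝ)/c + 1/(2*((kmax:ℝ)+1)) := add_le_add hdiff habs2
      have hnum1 : (S.card : ℝ)/c < 1/(2*((kmax:ℝ)+1)) := by
        rw [div_lt_div_iff₀ hc0 (by positivity)]
        nlinarith
      have hnum2 : 1/(2*((kmax:ℝ)+1)) + 1/(2*((kmax:ℝ)+1)) ≤ 1/(k:ℝ) := by
        rw [← add_div, div_le_div_iff₀ (by positivity) (show (0:ℝ) < (k:ℝ) by linarith)]
        nlinarith
      linarith
    · -- infinite case
      intro hvol
      have hcut := (hNcut X hXmem).2 hvol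
      have hlow : ((kmax : ℝ≥0∞) + 1) < volume ((⋃ e ∈ Efil E, cell E e) ∩ X) :=
        lt_of_lt_of_le hcut (measure_mono hsub2)
      have hlowR : ((kmax:ℝ)+1) < T := by
        rw [hTeq]
        have h := (ENNReal.toReal_lt_toReal (by simp) hTne).mpr hlow
        rw [ENNReal.toReal_add (by simp) (by simp)] at h
        simpa using h
      rw [hratio, lt_div_iff₀ hc0]
      have hfm : fmass (wgt E XS S c) X ≥ c * T - S.card := by
        have := (abs_le.mp happrox).1
        linarith
      have hkc : (k:ℝ)*c ≤ (kmax:ℝ)*c := by nlinarith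
      have h3 : c*((kmax:ℝ)+1) < c*T := by nlinarith
      nlinarith



def csets : Set (Set Lam) := Set.range cset

lemma csets_FIP : ∀ t ⊆ csets, t.Finite → (⋂₀ t).Nonempty := by
  intro t hsub hfin
  obtain ⟨w, hw⟩ := exists_wgt ((hfin.toFinset.attach).image
      (fun s => Classical.choose (hsub (hfin.mem_toFinset.mp s.2))))
  refine ⟨w, ?_⟩
  intro s hs
  have hs' : s ∈ hfin.toFinset := hfin.mem_toFinset.mpr hs
  have hmem := Finset.mem_image_of_mem
    (fun s : {x // x ∈ hfin.toFinset} => Classical.choose (hsub (hfin.mem_toFinset.mp s.2)))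
    (Finset.mem_attach hfin.toFinset ⟨s, hs'⟩)
  have hw' := hw _ hmem
  rwa [Classical.choose_spec (hsub (hfin.mem_toFinset.mp hs'))] at hw'

instance gen_neBot : (Filter.generate csets).NeBot :=
  Filter.generate_neBot_iff.mpr csets_FIP

def Ufil : Ultrafilter Lam := Ultrafilter.of (Filter.generate csets)

lemma mem_Ufil (cc : Cnd) : cset cc ∈ Ufil :=
  Ultrafilter.of_le _ (Filter.mem_generate_of_mem ⟨cc, rfl⟩)

abbrev FF : Type := Filter.Germ (Ufil : Filter Lam) ℝ

def iota : ℝ →+*o FF where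
  toRingHom := (Filter.Germ.coeRingHom (Ufil : Filter Lam)).comp (Pi.constRingHom Lam ℝ)
  monotone' := fun a b h => Filter.Germ.const_le h

lemma iota_apply (r : ℝ) : iota r = (↑(fun _ : Lam => r) : FF) := rfl

-- basic germ helpers
lemma coe_sub_iota (g : Lam → ℝ) (r : ℝ) :
    (↑g : FF) - iota r = ↑(fun w => g w - r) := rfl

lemma coe_div' (f g : Lam → ℝ) : (↑f : FF) / ↑g = ↑(fun w => f w / g w) := rfl

/-- uniqueness of the shadow candidate -/
lemma infl_unique {ξ : FF} {r L : ℝ} (h1 : Infinitesimal iota (ξ - iota r))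
    (h2 : Infinitesimal iota (ξ - iota L)) : r = L := by
  have habs : ∀ k : ℕ, 0 < k → |r - L| < 2/k := by
    intro k hk
    obtain ⟨h1a, h1b⟩ := h1 k hk
    obtain ⟨h2a, h2b⟩ := h2 k hk
    have e2 : iota (2/(k:ℝ)) = iota (1/(k:ℝ)) + iota (1/(k:ℝ)) := by
      rw [← map_add]; congr 1; ring
    rw [abs_lt]
    constructor
    · by_contra hcon
      push_neg at hcon
      have hle : iota (2/(k:ℝ)) ≤ iota (L - r) := iota.monotone' (by linarith)
      have hlt : iota (L - r) < iota (2/(k:ℝ)) := by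
        have e1 : iota (L - r) = (ξ - iota r) - (ξ - iota L) := by
          rw [map_sub]; ring
        rw [e1, e2]
        calc (ξ - iota r) - (ξ - iota L) < iota (1/(k:ℝ)) - (-iota (1/(k:ℝ))) :=
              sub_lt_sub h1b h2a
          _ = iota (1/(k:ℝ)) + iota (1/(k:ℝ)) := by ring
      exact absurd (lt_of_le_of_lt hle hlt) (lt_irrefl _)
    · by_contra hcon
      push_neg at hcon
      have hle : iota (2/(k:ℝ)) ≤ iota (r - L) := iota.monotone' (by linarith)
      have hlt : iota (r - L) < iota (2/(k:ℝ)) := by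
        have e1 : iota (r - L) = (ξ - iota L) - (ξ - iota r) := by
          rw [map_sub]; ring
        rw [e1, e2]
        calc (ξ - iota L) - (ξ - iota r) < iota (1/(k:ℝ)) - (-iota (1/(k:ℝ))) :=
              sub_lt_sub h2b h1a
          _ = iota (1/(k:ℝ)) + iota (1/(k:ℝ)) := by ring
      exact absurd (lt_of_le_of_lt hle hlt) (lt_irrefl _)
  by_contra hne
  have hpos : 0 < |r - L| := abs_pos.mpr (sub_ne_zero.mpr hne)
  obtain ⟨n, hn⟩ := exists_nat_gt (2/|r - L|)
  have hnposR : (0:ℝ) < n := lt_trans (div_pos two_pos hpos) hn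
  have hn0 : 0 < n := by exact_mod_cast hnposR
  have h2n : 2/(n:ℝ) < |r - L| := by
    rw [div_lt_iff₀ hnposR]
    have := (div_lt_iff₀ hpos).mp hn
    nlinarith
  exact absurd (habs n hn0) (not_lt.mpr (le_of_lt h2n))

lemma sh_coe_of_nearby {L : ℝ} (hL : 0 ≤ L) {g : Lam → ℝ}
    (h : ∀ k : ℕ, 0 < k → ∀ᶠ w in (Ufil : Filter Lam), |g w - L| < 1/k) :
    sh iota (↑g : FF) = ENNReal.ofReal L := by
  have hinf : Infinitesimal iota ((↑g : FF) - iota L) := by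
    intro k hk
    have hev := h k hk
    rw [coe_sub_iota]
    constructor
    · rw [show -iota (1/(k:ℝ)) = (↑(fun _ : Lam => -(1/(k:ℝ))) : FF) from rfl,
        Filter.Germ.coe_lt]
      filter_upwards [hev] with w hw
      have := abs_lt.mp hw
      linarith [this.1]
    · rw [show iota (1/(k:ℝ)) = (↑(fun _ : Lam => (1/(k:ℝ))) : FF) from rfl,
        Filter.Germ.coe_lt]
      filter_upwards [hev] with w hw
      exact (abs_lt.mp hw).2
  have hex : ∃ r : ℝ, Infinitesimal iota ((↑g : FF) - iota r) := ⟨L, hinf⟩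
  rw [sh, dif_pos hex]
  rw [infl_unique hex.choose_spec hinf]

lemma sh_eq_top_of_unbounded {g : Lam → ℝ}
    (h : ∀ K : ℕ, ∀ᶠ w in (Ufil : Filter Lam), (K:ℝ) < g w) :
    sh iota (↑g : FF) = ⊤ := by
  rw [sh, dif_neg]
  rintro ⟨r, hr⟩
  have h1 := (hr 1 one_pos).2
  rw [coe_sub_iota] at h1
  set K : ℕ := ⌈r⌉₊ + 2 with hK
  have hrK : r + 1 ≤ (K:ℝ) := by
    rw [hK]
    push_cast
    rcases le_or_gt r 0 with h | h
    · have : (0:ℝ) ≤ (⌈r⌉₊ : ℝ) := Nat.cast_nonneg _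
      linarith
    · linarith [Nat.le_ceil r]
  have h2 := h K
  -- ξ < iota r + iota 1 ≤ iota K < ξ
  have hlt1 : (↑g : FF) < iota (r + 1) := by
    rw [map_add, iota_apply, iota_apply]
    have : (↑g : FF) - ↑(fun _ : Lam => r) < ↑(fun _ : Lam => (1:ℝ)) := by
      have hcast : (1/((1:ℕ):ℝ)) = (1:ℝ) := by norm_num
      calc (↑g : FF) - ↑(fun _ : Lam => r) = ↑(fun w => g w - r) := rfl
        _ < iota (1/((1:ℕ):ℝ)) := h1
        _ = ↑(fun _ : Lam => (1:ℝ)) := by rw [hcast]; rfl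
    linarith [this]
  have hle2 : iota (r + 1) ≤ iota (K:ℝ) := iota.monotone' hrK
  have hlt3 : iota (K:ℝ) < (↑g : FF) := by
    rw [iota_apply, Filter.Germ.coe_lt]
    exact h2
  exact absurd (lt_trans (lt_of_lt_of_le hlt1 hle2) hlt3) (lt_irrefl _)





lemma ratio_nonneg {w : Lam} (hw : w ∈ cset Cnd.nn) (X : Set ℝ) : 0 ≤ ratio w X :=
  div_nonneg (fmass_nonneg hw.1 X) (le_trans zero_le_one hw.2)

lemma ratio_mono {w : Lam} (hw : w ∈ cset Cnd.nn) {X Y : Set ℝ} (hXY : X ⊆ Y) :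
    ratio w X ≤ ratio w Y := by
  have hu : (0:ℝ) < fmass w (Set.Ico 0 1) := lt_of_lt_of_le one_pos hw.2
  rw [ratio, ratio, div_le_div_iff₀ hu hu]
  have := fmass_mono hw.1 hXY
  nlinarith

def numF (X : Set ℝ) : FF := ↑(fun w : Lam => fmass w X)

def NS : NumerositySystem ℝ where
  F := FF
  ι := iota
  num := numF
  nonneg := fun X => by
    have h := mem_Ufil Cnd.nn
    have h0 : ((0:FF)) = ↑(fun _ : Lam => (0:ℝ)) := rfl
    rw [numF, h0, Filter.Germ.coe_le]
    filter_upwards [h] with w hw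
    exact fmass_nonneg hw.1 X
  singleton_eq_one := fun x => by
    have h := mem_Ufil (Cnd.sing x)
    have h1 : ((1:FF)) = ↑(fun _ : Lam => (1:ℝ)) := rfl
    rw [numF, h1, Filter.Germ.coe_eq]
    filter_upwards [h] with w hw
    rw [fmass_singleton]
    exact hw
  additive := fun A B hAB => by
    show (↑(fun w : Lam => fmass w (A ∪ B)) : FF)
        = ↑(fun w : Lam => fmass w A) + ↑(fun w : Lam => fmass w B)
    rw [← Filter.Germ.coe_add, Filter.Germ.coe_eq]
    exact Eventually.of_forall (fun w => fmass_union w hAB)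


end NumConstruction

/-- There is an elementary numerosity n on ℝ which is invariant on half-open intervals
of equal length, rescales by rational factors, and whose ratio to the unit n([0,1))
has shadow equal to Lebesgue measure on Lebesgue measurable sets, and shadow at most
the Lebesgue outer measure on arbitrary sets. -/
theorem stmt6 :
    ∃ S : NumerositySystem ℝ,
      (∀ x y a : ℝ, 0 < a →
        S.num (Set.Ico x (x + a)) = S.num (Set.Ico y (y + a))) ∧
      (∀ (x : ℝ) (a : ℚ), 0 < a →
        S.num (Set.Ico x (x + (a : ℝ))) = S.ι (a : ℝ) * S.num (Set.Ico (0 : ℝ) 1)) ∧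
      (∀ X : Set ℝ, MeasureTheory.NullMeasurableSet X MeasureTheory.volume →
        sh S.ι (S.num X / S.num (Set.Ico (0 : ℝ) 1)) = MeasureTheory.volume X) ∧
      (∀ X : Set ℝ,
        sh S.ι (S.num X / S.num (Set.Ico (0 : ℝ) 1)) ≤ MeasureTheory.volume X) := by
  refine ⟨NS, ?_, ?_, ?_, ?_⟩
  · intro x y a ha
    show numF _ = numF _
    rw [numF, numF, Filter.Germ.coe_eq]
    filter_upwards [mem_Ufil (Cnd.intv x y a)] with w hw
    exact hw ha
  · intro x a ha
    show numF _ = iota (a:ℝ) * numF _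
    rw [numF, numF, iota_apply, ← Filter.Germ.coe_mul, Filter.Germ.coe_eq]
    filter_upwards [mem_Ufil (Cnd.scal x a)] with w hw
    exact hw ha
  · intro X hX
    obtain ⟨X₁, hX₁sub, hX₁m, hX₁ae⟩ := hX.exists_measurable_subset_ae_eq
    obtain ⟨X₂, hX₂sup, hX₂m, hX₂ae⟩ := hX.exists_measurable_superset_ae_eq
    have hv1 : volume X₁ = volume X := measure_congr hX₁ae
    have hv2 : volume X₂ = volume X := measure_congr hX₂ae
    have hratio : NS.num X / NS.num (Set.Ico (0:ℝ) 1) = (↑(fun w => ratio w X) : FF) := rfl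
    show sh iota (NS.num X / NS.num (Set.Ico (0:ℝ) 1)) = volume X
    rw [hratio]
    by_cases hvol : volume X = ⊤
    · rw [hvol]
      apply sh_eq_top_of_unbounded
      intro K
      filter_upwards [mem_Ufil (Cnd.meas X₁ (K+1)), mem_Ufil Cnd.nn] with w h1 hnn
      have hb := (h1 hX₁m (Nat.succ_pos K)).2 (by rw [hv1, hvol])
      have hmono := ratio_mono hnn hX₁sub
      have hcast : ((K:ℝ)) < (((K+1) : ℕ):ℝ) := by push_cast; linarith
      linarith
    · rw [← ENNReal.ofReal_toReal hvol]
      apply sh_coe_of_nearby ENNReal.toReal_nonneg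
      intro k hk
      filter_upwards [mem_Ufil (Cnd.meas X₁ k), mem_Ufil (Cnd.meas X₂ k), mem_Ufil Cnd.nn]
        with w h1 h2 hnn
      have b1 := (h1 hX₁m hk).1 (by rw [hv1]; exact hvol)
      have b2 := (h2 hX₂m hk).1 (by rw [hv2]; exact hvol)
      rw [hv1] at b1
      rw [hv2] at b2
      have m1 := ratio_mono hnn hX₁sub
      have m2 := ratio_mono hnn hX₂sup
      have a1 := abs_lt.mp b1
      have a2 := abs_lt.mp b2
      rw [abs_lt]
      exact ⟨by linarith [a1.1], by linarith [a2.2]⟩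
  · intro X
    by_cases hvol : volume X = ⊤
    · rw [hvol]; exact le_top
    obtain ⟨X₂, hsub, hm, hveq⟩ := MeasureTheory.exists_measurable_superset volume X
    have hvol2 : volume X₂ ≠ ⊤ := by rw [hveq]; exact hvol
    have hv2 : (volume X₂).toReal = (volume X).toReal := by rw [hveq]
    set v : ℝ := (volume X).toReal with hvdef
    have hratio : NS.num X / NS.num (Set.Ico (0:ℝ) 1) = (↑(fun w => ratio w X) : FF) := rfl
    show sh iota (NS.num X / NS.num (Set.Ico (0:ℝ) 1)) ≤ volume X
    rw [hratio]
    have hb : ∀ᶠ w in (Ufil : Filter Lam), ratio w X ∈ Set.Icc (0:ℝ) (v+1) := by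
      filter_upwards [mem_Ufil (Cnd.meas X₂ 1), mem_Ufil Cnd.nn] with w h2 hnn
      refine ⟨ratio_nonneg hnn X, ?_⟩
      have hb2 := (h2 hm one_pos).1 hvol2
      rw [hv2] at hb2
      have hmono := ratio_mono hnn hsub
      have ha := abs_lt.mp hb2
      have hone : 1/((1:ℕ):ℝ) = 1 := by norm_num
      rw [hone] at ha
      linarith [ha.2]
    obtain ⟨L, hLmem, hconv⟩ := (isCompact_Icc (a := (0:ℝ)) (b := v+1)).ultrafilter_le_nhds
      (Ufil.map (fun w => ratio w X)) (le_principal_iff.mpr hb)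
    have hnear : ∀ k : ℕ, 0 < k → ∀ᶠ w in (Ufil : Filter Lam), |ratio w X - L| < 1/k := by
      intro k hk
      have hpos : (0:ℝ) < 1/k := by positivity
      have hball : {x : ℝ | |x - L| < 1/k} ∈ 𝓝 L := by
        have h := Metric.ball_mem_nhds L hpos
        have : Metric.ball L (1/k) = {x : ℝ | |x - L| < 1/k} := by
          ext x; simp [Metric.mem_ball, Real.dist_eq]
        rwa [this] at h
      exact hconv hball
    rw [sh_coe_of_nearby hLmem.1 hnear]
    have hLle : L ≤ v := by
      by_contra hgt
      push_neg at hgt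
      obtain ⟨m, hm'⟩ := exists_nat_one_div_lt (show (0:ℝ) < (L - v)/2 by linarith)
      have hk : 0 < m + 1 := Nat.succ_pos m
      have ev1 := hnear (m+1) hk
      have ev2 : ∀ᶠ w in (Ufil : Filter Lam), ratio w X < v + 1/(m+1:ℕ) := by
        filter_upwards [mem_Ufil (Cnd.meas X₂ (m+1)), mem_Ufil Cnd.nn] with w h2 hnn
        have hb2 := (h2 hm hk).1 hvol2
        rw [hv2] at hb2
        have hmono := ratio_mono hnn hsub
        have ha := abs_lt.mp hb2
        linarith [ha.2]
      obtain ⟨w, hw1, hw2⟩ := (ev1.and ev2).exists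
      have habs := abs_lt.mp hw1
      have hcast : (1:ℝ)/((m+1:ℕ):ℝ) = 1/((m:ℝ)+1) := by push_cast; ring
      have hklt : (1:ℝ)/((m+1:ℕ):ℝ) < (L - v)/2 := by rw [hcast]; exact hm'
      linarith [habs.1]
    calc ENNReal.ofReal L ≤ ENNReal.ofReal v := ENNReal.ofReal_le_ofReal hLle
      _ = volume X := ENNReal.ofReal_toReal hvol
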